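/- Let m be an even-odd perfect matching of {0, 1, ..., 2n-1}, i.e., every chord of m contains exactly one even and one odd number. Then every vertex of the interlacement graph of m has even degree (condition C1 holds). -/

import Mathlib

/-- Two sorted pairs (chords) are interlaced. -/
def Interlaced (p q : ℕ × ℕ) : Prop :=
  (p.1 < q.1 ∧ q.1 < p.2 ∧ p.2 < q.2) ∨ (q.1 < p.1 ∧ p.1 < q.2 ∧ q.2 < p.2)

/-- `m` is a perfect matching of `{0, ..., 2n-1}` given by sorted pairs (chords):
every element of `{0, ..., 2n-1}` belongs to exactly one chord. -/
def IsPairMatching (n : ℕ) (m : Finset (ℕ × ℕ)) : Prop :=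
  (∀ p ∈ m, p.1 < p.2 ∧ p.1 ∈ Finset.range (2 * n) ∧ p.2 ∈ Finset.range (2 * n)) ∧
  ∀ x ∈ Finset.range (2 * n), ∃! p, p ∈ m ∧ (x = p.1 ∨ x = p.2)

/-- An even-odd perfect matching: each chord has one even and one odd endpoint. -/
def IsEvenOddPairMatching (n : ℕ) (m : Finset (ℕ × ℕ)) : Prop :=
  IsPairMatching n m ∧ ∀ p ∈ m, (Even p.1 ∧ Odd p.2) ∨ (Odd p.1 ∧ Even p.2)

/-- The interlacement graph of a matching: vertices are the chords,
two chords are adjacent iff they are interlaced. -/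
def matchGraph (m : Finset (ℕ × ℕ)) : SimpleGraph {p : ℕ × ℕ // p ∈ m} where
  Adj p q := Interlaced p.val q.val
  symm := ⟨fun p q h => Or.symm h⟩
  loopless := ⟨fun p h => by rcases h with ⟨h, _⟩ | ⟨h, _⟩ <;> exact lt_irrefl _ h⟩

/-- Condition C1: every vertex has even degree. -/
def CondC1 {V : Type*} (G : SimpleGraph V) : Prop :=
  ∀ v : V, Even (G.neighborSet v).ncard

/-- endpoint count of `q` inside the open interval `(a,b)`. -/
def cnt (a b : ℕ) (q : ℕ × ℕ) : ℕ :=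
  ((Finset.Ioo a b).filter (fun x => x = q.1 ∨ x = q.2)).card

lemma cnt_le_two (a b : ℕ) (q : ℕ × ℕ) : cnt a b q ≤ 2 := by
  classical
  have h : ((Finset.Ioo a b).filter (fun x => x = q.1 ∨ x = q.2)) ⊆ {q.1, q.2} := by
    intro x hx
    simp only [Finset.mem_filter] at hx
    simp [hx.2]
  calc cnt a b q ≤ ({q.1, q.2} : Finset ℕ).card := Finset.card_le_card h
    _ ≤ 2 := Finset.card_insert_le _ _ |>.trans (by simp)

lemma interlaced_iff_cnt (a b : ℕ) (q : ℕ × ℕ) (hq : q.1 < q.2)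
    (h1a : q.1 ≠ a) (h1b : q.1 ≠ b) (h2a : q.2 ≠ a) (h2b : q.2 ≠ b) :
    Interlaced (a, b) q ↔ cnt a b q = 1 := by
  unfold cnt
  rw [Finset.filter_or, Finset.filter_eq', Finset.filter_eq',
    Finset.card_union_of_disjoint]
  · simp only [Finset.mem_Ioo, Interlaced]
    split_ifs <;> simp_all <;> omega
  · split_ifs <;> simp_all [Finset.disjoint_singleton] <;> omega

instance (p q : ℕ × ℕ) : Decidable (Interlaced p q) := by
  unfold Interlaced; infer_instance

/-- Key counting lemma. -/
lemma key (n : ℕ) (m : Finset (ℕ × ℕ)) (hm : IsEvenOddPairMatching n m)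
    (p : ℕ × ℕ) (hp : p ∈ m) :
    Even ((m.filter (fun q => Interlaced p q)).card) := by
  classical
  obtain ⟨⟨hsorted, huniq⟩, hpar⟩ := hm
  obtain ⟨hplt, hp1, hp2⟩ := hsorted p hp
  set a := p.1 with ha
  set b := p.2 with hb
  -- total count of endpoints in (a,b) is |Ioo a b|
  have hsum : ∑ q ∈ m, cnt a b q = (Finset.Ioo a b).card := by
    unfold cnt
    simp only [Finset.card_filter]
    rw [Finset.sum_comm]
    rw [show (Finset.Ioo a b).card = ∑ x ∈ Finset.Ioo a b, 1 by simp]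
    refine Finset.sum_congr rfl (fun x hx => ?_)
    simp only [Finset.mem_Ioo] at hx
    have hx2n : x ∈ Finset.range (2 * n) := by
      simp only [Finset.mem_range] at hp2 ⊢; omega
    obtain ⟨r, hr, hru⟩ := huniq x hx2n
    rw [← Finset.card_filter]
    rw [Finset.card_eq_one]
    refine ⟨r, ?_⟩
    ext s
    simp only [Finset.mem_filter, Finset.mem_singleton]
    constructor
    · intro hs; exact hru s hs
    · intro hs; subst hs; exact hr
  -- |Ioo a b| is even
  have hioo : Even ((Finset.Ioo a b).card) := by
    rw [Nat.card_Ioo]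
    rcases hpar p hp with ⟨he, ho⟩ | ⟨ho, he⟩ <;>
      [rw [Nat.even_iff] at he; rw [Nat.even_iff] at he] <;>
      rw [Nat.odd_iff] at ho <;> rw [Nat.even_iff] <;> omega
  have heven : Even (∑ q ∈ m, cnt a b q) := hsum ▸ hioo
  -- split the sum
  rw [← Finset.sum_filter_add_sum_filter_not m (fun q => cnt a b q = 1)] at heven
  have h1 : ∑ q ∈ m.filter (fun q => cnt a b q = 1), cnt a b q
      = (m.filter (fun q => cnt a b q = 1)).card := by
    rw [Finset.sum_congr rfl (fun q hq => (Finset.mem_filter.mp hq).2)]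
    simp
  have h2 : Even (∑ q ∈ m.filter (fun q => ¬ cnt a b q = 1), cnt a b q) := by
    refine Finset.even_sum _ (fun q hq => ?_)
    have := Finset.mem_filter.mp hq
    have hle := cnt_le_two a b q
    rw [Nat.even_iff]
    omega
  rw [h1] at heven
  have hcard : Even ((m.filter (fun q => cnt a b q = 1)).card) := by
    rcases h2 with ⟨k, hk⟩
    rcases heven with ⟨j, hj⟩
    exact ⟨j - k, by omega⟩
  -- the two filters coincide
  have hfe : m.filter (fun q => Interlaced p q) = m.filter (fun q => cnt a b q = 1) := by
    refine Finset.filter_congr (fun q hq => ?_)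
    by_cases hqp : q = p
    · subst hqp
      constructor
      · intro h; rcases h with ⟨h, _⟩ | ⟨h, _⟩ <;> exact absurd h (lt_irrefl _)
      · intro h
        exfalso
        unfold cnt at h
        rw [Finset.card_eq_one] at h
        obtain ⟨x, hx⟩ := h
        have : x ∈ (Finset.Ioo a b).filter (fun y => y = q.1 ∨ y = q.2) := by
          rw [hx]; simp
        simp only [Finset.mem_filter, Finset.mem_Ioo] at this
        omega
    · obtain ⟨hqlt, hq1, hq2⟩ := hsorted q hq
      -- endpoints of q differ from a,b
      have hne : ∀ x, (x = q.1 ∨ x = q.2) → x ≠ a ∧ x ≠ b := by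
        intro x hx
        constructor <;> intro hxe <;> subst hxe
        · obtain ⟨r, hr, hru⟩ := huniq a hp1
          have e1 : q = r := hru q ⟨hq, hx⟩
          have e2 : p = r := hru p ⟨hp, Or.inl rfl⟩
          exact hqp (e1.trans e2.symm)
        · obtain ⟨r, hr, hru⟩ := huniq b hp2
          have e1 : q = r := hru q ⟨hq, hx⟩
          have e2 : p = r := hru p ⟨hp, Or.inr rfl⟩
          exact hqp (e1.trans e2.symm)
      have h1 := hne q.1 (Or.inl rfl)
      have h2 := hne q.2 (Or.inr rfl)
      have : Interlaced (a, b) q ↔ cnt a b q = 1 :=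
        interlaced_iff_cnt a b q hqlt h1.1 h1.2 h2.1 h2.2
      simpa using this
  rw [hfe]
  exact hcard

/-- For an even-odd perfect matching of `{0, ..., 2n-1}`, every vertex of its
interlacement graph has even degree (condition C1 holds). -/
theorem evenOddMatching_condC1 (n : ℕ) (m : Finset (ℕ × ℕ))
    (hm : IsEvenOddPairMatching n m) :
    CondC1 (matchGraph m) := by
  classical
  intro v
  have hset : (matchGraph m).neighborSet v
      = ↑(Finset.univ.filter (fun q : {p : ℕ × ℕ // p ∈ m} => (matchGraph m).Adj v q)) := by
    ext q; simp [SimpleGraph.neighborSet]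
  rw [hset, Set.ncard_coe_finset]
  have hcard : (Finset.univ.filter (fun q : {p : ℕ × ℕ // p ∈ m} => (matchGraph m).Adj v q)).card
      = (m.filter (fun q => Interlaced v.val q)).card := by
    refine Finset.card_bij (fun q _ => q.val) ?_ ?_ ?_
    · intro q hq
      simp only [Finset.mem_filter, Finset.mem_univ, true_and] at hq
      exact Finset.mem_filter.mpr ⟨q.2, hq⟩
    · intro q1 _ q2 _ h; exact Subtype.ext h
    · intro r hr
      simp only [Finset.mem_filter] at hr
      exact ⟨⟨r, hr.1⟩, Finset.mem_filter.mpr ⟨Finset.mem_univ _, hr.2⟩, rfl⟩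
  rw [hcard]
  exact key n m hm v.val v.2
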